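/- For all integers j ≥ 0 and ν ≥ 0 and every r > 0, the function ψ_j(r) = e^{−r}·g_j(1/r) satisfies ψ_j″(r) + (2ν/r)·ψ_j′(r) − ψ_j(r) = 2(j − ν)·ψ_{j+1}(r). In particular, taking j = ν, ψ_ν″(r) + (2ν/r)·ψ_ν′(r) − ψ_ν(r) = 0 for all r > 0. -/

import Mathlib

open Polynomial

/-- The polynomials `g_j`, defined by `g_0 = 1` and `g_{j+1}(t) = t³ g_j'(t) + t g_j(t)`. -/
noncomputable def g : ℕ → Polynomial ℤ
  | 0 => 1
  | j + 1 => X ^ 3 * derivative (g j) + X * g j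

lemma gD : ∀ j : ℕ, X ^ 3 * derivative (derivative (g j)) +
    (2 * X + 2 * X ^ 2 - ((2 * j : ℕ) : ℤ[X]) * X ^ 2) * derivative (g j) =
      ((2 * j : ℕ) : ℤ[X]) * g j
  | 0 => by simp [g]
  | j + 1 => by
    have h := gD j
    have h' := congrArg derivative h
    simp only [g, derivative_mul, derivative_add, derivative_sub, derivative_X_pow,
      derivative_X, derivative_natCast, derivative_ofNat, derivative_one,
      Polynomial.C_eq_natCast] at h' ⊢
    push_cast at h h' ⊢
    linear_combination (X ^ 2 + X) * h + X ^ 3 * h'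

lemma gRec (j : ℕ) : g (j + 2) =
    ((2 * j + 1 : ℕ) : ℤ[X]) * X ^ 2 * g (j + 1) + X ^ 2 * g j := by
  have h := gD j
  simp only [g, derivative_mul, derivative_add, derivative_X_pow, derivative_X,
    Polynomial.C_eq_natCast]
  push_cast at h ⊢
  linear_combination X ^ 3 * h

/-- `ψ_j(r) = e^{-r} g_j(1/r)`. -/
noncomputable def psi (j : ℕ) (r : ℝ) : ℝ := Real.exp (-r) * (Polynomial.aeval r⁻¹) (g j)

lemma psi_hasDerivAt (j : ℕ) (r : ℝ) (hr : r ≠ 0) :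
    HasDerivAt (psi j) (-(r * psi (j + 1) r)) r := by
  have h1 : HasDerivAt (fun x : ℝ => Real.exp (-x)) (-Real.exp (-r)) r := by
    simpa using ((hasDerivAt_id r).neg).exp
  have h2 : HasDerivAt (fun x : ℝ => (Polynomial.aeval x⁻¹) (g j))
      ((Polynomial.aeval r⁻¹) (derivative (g j)) * (-(r ^ 2)⁻¹)) r :=
    ((g j).hasDerivAt_aeval r⁻¹).comp r (hasDerivAt_inv hr)
  have : HasDerivAt (fun x : ℝ => Real.exp (-x) * (Polynomial.aeval x⁻¹) (g j)) _ r :=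
    h1.fun_mul h2
  convert this using 1
  · rfl
  simp only [psi, g, map_add, map_mul, map_pow, Polynomial.aeval_X]
  field_simp
  ring

lemma psi_deriv (j : ℕ) {r : ℝ} (hr : r ≠ 0) :
    deriv (psi j) r = -(r * psi (j + 1) r) := (psi_hasDerivAt j r hr).deriv

lemma psi_deriv2 (j : ℕ) {r : ℝ} (hr : r ≠ 0) :
    deriv (deriv (psi j)) r = -psi (j + 1) r + r ^ 2 * psi (j + 2) r := by
  have hev : deriv (psi j) =ᶠ[nhds r] fun x => -(x * psi (j + 1) x) := by
    filter_upwards [isOpen_compl_singleton.mem_nhds (s := ({0}ᶜ : Set ℝ)) hr] with x hx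
    exact psi_deriv j hx
  rw [hev.deriv_eq]
  have h : HasDerivAt (fun x : ℝ => -(x * psi (j + 1) x))
      (-(1 * psi (j + 1) r + r * -(r * psi (j + 2) r))) r :=
    ((hasDerivAt_id r).mul (psi_hasDerivAt (j + 1) r hr)).neg
  rw [h.deriv]; ring

lemma psi_rec (j : ℕ) {r : ℝ} (hr : r ≠ 0) :
    r ^ 2 * psi (j + 2) r = (2 * j + 1) * psi (j + 1) r + psi j r := by
  have h := congrArg (fun p : ℤ[X] => Real.exp (-r) * (Polynomial.aeval r⁻¹) p) (gRec j)
  simp only [psi, map_add, map_mul, map_pow, Polynomial.aeval_X, map_natCast] at h ⊢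
  rw [h]
  push_cast
  field_simp

theorem psi_bessel_identity (j ν : ℕ) (r : ℝ) (hr : 0 < r) :
    (deriv (deriv (psi j)) r + (2 * (ν : ℝ) / r) * deriv (psi j) r - psi j r =
        2 * ((j : ℝ) - ν) * psi (j + 1) r) ∧
      (deriv (deriv (psi ν)) r + (2 * (ν : ℝ) / r) * deriv (psi ν) r - psi ν r = 0) := by
  have key : ∀ k : ℕ, deriv (deriv (psi k)) r + (2 * (ν : ℝ) / r) * deriv (psi k) r - psi k r =
      2 * ((k : ℝ) - ν) * psi (k + 1) r := by
    intro k
    rw [psi_deriv2 k hr.ne', psi_deriv k hr.ne']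
    have h := psi_rec k hr.ne'
    field_simp
    linear_combination h
  exact ⟨key j, by rw [key ν]; ring⟩
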